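/- Let a(n) be defined by ∑_{n≥0} a(n) qⁿ = (−q;q)∞²/(q;q)∞ and let ω_n be the n-th generalized pentagonal number (ω_{2m} = m(3m+1)/2, ω_{2m−1} = m(3m−1)/2). Then a(ω_n) ≡ 1 (mod 4) if n ≡ 0 or 3 (mod 4), and a(ω_n) ≡ 3 (mod 4) if n ≡ 1 or 2 (mod 4). -/

import Mathlib

open PowerSeries Finset

/-- The power series `∏_{k=0}^∞ g k`, defined coefficientwise via stabilized
finite partial products (valid when `g k ≡ 1` modulo degree `> k`). -/
noncomputable def iProd (g : ℕ → PowerSeries ℤ) : PowerSeries ℤ :=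
  PowerSeries.mk fun n => PowerSeries.coeff n (∏ k ∈ Finset.range (n + 1), g k)

/-- `(q^j; q^j)_∞ = ∏_{k≥1} (1 - q^{jk})` as a formal power series. -/
noncomputable def F (j : ℕ) : PowerSeries ℤ :=
  iProd fun k => 1 - (PowerSeries.X : PowerSeries ℤ) ^ (j * (k + 1))

/-- `(-q; q)_∞ = ∏_{k≥1} (1 + q^k)` as a formal power series. -/
noncomputable def Fneg : PowerSeries ℤ :=
  iProd fun k => 1 + (PowerSeries.X : PowerSeries ℤ) ^ (k + 1)

/-- Multiplicative inverse of a power series with constant coefficient `1`. -/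
noncomputable def psInv (f : PowerSeries ℤ) : PowerSeries ℤ := PowerSeries.invOfUnit f 1
/-- `a n` is the coefficient of `q^n` in `(-q;q)_∞^2 / (q;q)_∞`. -/
noncomputable def a (n : ℕ) : ℤ := PowerSeries.coeff n (Fneg ^ 2 * psInv (F 1))
/-- Generalized pentagonal numbers: `gp (2m) = m(3m+1)/2` and `gp (2m-1) = m(3m-1)/2`. -/
def gp (n : ℕ) : ℕ :=
  if Even n then (n / 2) * (3 * (n / 2) + 1) / 2
  else ((n + 1) / 2) * (3 * ((n + 1) / 2) - 1) / 2

section Aux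

/-- triangular numbers -/
def tri : ℕ → ℕ
  | 0 => 0
  | (j+1) => tri j + (j+1)

/-- pentagonal numbers m(3m-1)/2 -/
def pent : ℕ → ℕ
  | 0 => 0
  | (m+1) => pent m + (3*m+1)

def pent' (m : ℕ) : ℕ := pent m + m

lemma ptri (m : ℕ) : pent m + m = m*m + tri m := by
  induction m with
  | zero => rfl
  | succ k ih =>
    show pent k + (3*k+1) + (k+1) = (k+1)*(k+1) + (tri k + (k+1))
    have : pent k + (3*k+1) + (k+1) = (pent k + k) + (3*k + 2) := by ring
    rw [this, ih]; ring

lemma two_pent' (m : ℕ) : 2 * pent' m = m * (3*m+1) := by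
  induction m with
  | zero => rfl
  | succ k ih =>
    have h : pent' (k+1) = pent' k + (3*k+2) := by
      show pent (k+1) + (k+1) = (pent k + k) + (3*k+2)
      show pent k + (3*k+1) + (k+1) = _
      ring
    rw [h, Nat.mul_add, ih]; ring

lemma two_pent (m : ℕ) : 2 * pent m + 2 * m = m * (3*m+1) := by
  have := two_pent' m
  unfold pent' at this
  omega

lemma pent_succ_gt (m : ℕ) : pent' m < pent (m+1) := by
  show pent m + m < pent m + (3*m+1); omega

lemma pent_lt_pent' {m : ℕ} (h : 1 ≤ m) : pent m < pent' m := by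
  show pent m < pent m + m; omega

lemma pent_strictMono : StrictMono pent :=
  strictMono_nat_of_lt_succ fun m => by show pent m < pent m + (3*m+1); omega

lemma pent'_strictMono : StrictMono pent' := by
  apply strictMono_nat_of_lt_succ
  intro m
  exact lt_trans (pent_succ_gt m) (pent_lt_pent' (by omega))

lemma pent_one_le {m : ℕ} (h : 1 ≤ m) : 1 ≤ pent m := by
  have := pent_strictMono (show 0 < m from h); simp [pent] at this; omega

lemma le_pent (m : ℕ) : m ≤ pent m := by
  induction m with
  | zero => simp
  | succ k ih => show k + 1 ≤ pent k + (3*k+1); omega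

/-- pent' m never equals pent k for k,m ≥ 1 -/
lemma pent_ne_pent' {k m : ℕ} (hk : 1 ≤ k) (hm : 1 ≤ m) : pent k ≠ pent' m := by
  rcases lt_trichotomy k m with h | h | h
  · have h1 : pent k < pent m := pent_strictMono h
    exact ne_of_lt (lt_trans h1 (pent_lt_pent' hm))
  · subst h; exact ne_of_lt (pent_lt_pent' hm)
  · have h1 : pent (m+1) ≤ pent k := pent_strictMono.le_iff_le.mpr h
    exact (ne_of_lt (lt_of_lt_of_le (pent_succ_gt m) h1)).symm

lemma gp_even {n : ℕ} (h : Even n) : gp n = pent' ((n+1)/2) := by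
  have h0 : n % 2 = 0 := Nat.even_iff.mp h
  have h2 : (n+1)/2 = n/2 := by omega
  rw [gp, if_pos h, h2, ← two_pent' (n/2), Nat.mul_div_cancel_left _ (by norm_num)]

lemma gp_odd {n : ℕ} (h : ¬ Even n) : gp n = pent ((n+1)/2) := by
  rw [gp, if_neg h]
  set M := (n+1)/2 with hM
  have h' : n % 2 = 1 := Nat.odd_iff.mp (Nat.not_even_iff_odd.mp h)
  have hM1 : 1 ≤ M := by omega
  have key : M * (3*M-1) = 2 * pent M := by
    have := two_pent M
    have h3 : 3*M - 1 + 1 = 3*M := by omega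
    nlinarith [this, Nat.sub_add_cancel (show 1 ≤ 3*M by omega)]
  rw [key, Nat.mul_div_cancel_left _ (by norm_num)]

/-- `∏_{k=j+1}^{n} (1 - X^k)` -/
noncomputable def LL (n j : ℕ) : PowerSeries ℤ := ∏ k ∈ Finset.Ico j n, (1 - X^(k+1))

/-- Shanks's sum -/
noncomputable def SS (n : ℕ) : PowerSeries ℤ :=
  ∑ j ∈ range (n+1), (-1)^j * X^(j*n + tri j) * LL n j

lemma LL_self (n : ℕ) : LL n n = 1 := by simp [LL]

lemma LL_succ_top {n j : ℕ} (h : j ≤ n) : LL (n+1) j = LL n j * (1 - X^(n+1)) := by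
  rw [LL, Finset.prod_Ico_succ_top (by omega), ← LL]

lemma LL_succ_bot {n j : ℕ} (h : j < n) : LL n j = (1 - X^(j+1)) * LL n (j+1) := by
  rw [LL, Finset.prod_eq_prod_Ico_succ_bot h, ← LL]

lemma SS_rec (n : ℕ) :
    SS (n+1) = SS n + (-1)^(n+1) * (X^(pent (n+1)) + X^(pent' (n+1))) := by
  classical
  set N := n + 1 with hN
  -- terms
  have hsplit : SS N = (∑ j ∈ range N, (-1)^j * X^(j*N + tri j) * (LL n j * (1 - X^N)))
      + (-1:PowerSeries ℤ)^N * X^(N*N + tri N) := by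
    rw [SS, Finset.sum_range_succ, LL_self, mul_one]
    congr 1
    apply Finset.sum_congr rfl
    intro j hj
    rw [← LL_succ_top (by simpa using Nat.lt_succ_iff.mp (Finset.mem_range.mp hj))]
  -- expand the product
  have hexp : ∀ j, ((-1:PowerSeries ℤ)^j * X^(j*N + tri j) * (LL n j * (1 - X^N)))
      = (-1)^j * X^(j*N + tri j) * LL n j - (-1)^j * X^(j*N + tri j + N) * LL n j := by
    intro j; rw [pow_add]; ring
  rw [hsplit]
  have : (∑ j ∈ range N, (-1:PowerSeries ℤ)^j * X^(j*N + tri j) * (LL n j * (1 - X^N)))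
      = (∑ j ∈ range N, (-1:PowerSeries ℤ)^j * X^(j*N + tri j) * LL n j)
        - (∑ j ∈ range N, (-1:PowerSeries ℤ)^j * X^(j*N + tri j + N) * LL n j) := by
    rw [← Finset.sum_sub_distrib]
    exact Finset.sum_congr rfl fun j _ => hexp j
  rw [this]
  -- name the three sums
  set A := ∑ j ∈ range N, (-1:PowerSeries ℤ)^j * X^(j*N + tri j) * LL n j with hA
  set B := ∑ j ∈ range N, (-1:PowerSeries ℤ)^j * X^(j*N + tri j + N) * LL n j with hB
  -- B = A - SS n - (-1)^N X^(pent N)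
  have keyB : B = A - SS n - (-1)^N * X^(pent N) := by
    -- peel top term of B (index n), peel using sum_range_succ since N = n+1
    have hBsplit : B = (∑ j ∈ range n, (-1:PowerSeries ℤ)^j * X^(j*N + tri j + N) * LL n j)
        + (-1)^n * X^(n*N + tri n + N) * LL n n := by
      rw [hB, hN, Finset.sum_range_succ]
    -- per-term identity for j < n :
    have hterm : ∀ j ∈ range n, (-1:PowerSeries ℤ)^j * X^(j*N + tri j + N) * LL n j
        = (-1)^(j+1) * X^((j+1)*N + tri (j+1)) * LL n (j+1)
          - (-1)^(j+1) * X^((j+1)*n + tri (j+1)) * LL n (j+1) := by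
      intro j hj
      have hjn : j < n := Finset.mem_range.mp hj
      rw [LL_succ_bot hjn]
      have e1 : (j+1)*n + tri (j+1) = j*N + tri j + N := by
        show (j+1)*n + (tri j + (j+1)) = j*(n+1) + tri j + (n+1)
        ring
      have e2 : (j+1)*N + tri (j+1) = (j*N + tri j + N) + (j+1) := by
        show (j+1)*(n+1) + (tri j + (j+1)) = (j*(n+1) + tri j + (n+1)) + (j+1)
        ring
      rw [e1, e2, pow_add, pow_add]
      ring
    -- top term of B:
    have htop : (-1:PowerSeries ℤ)^n * X^(n*N + tri n + N) * LL n n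
        = - ((-1)^N * X^(pent N)) := by
      rw [LL_self, mul_one]
      have e3 : n*N + tri n + N = pent N := by
        have h1 := ptri N
        have h2 : tri N = tri n + N := by show tri (n+1) = _; rw [tri]
        have : pent N + N = N*N + tri N := h1
        have hNN : N*N + tri N = n*N + tri n + N + N := by
          rw [h2, hN]; ring
        omega
      rw [e3, hN, pow_succ]
      ring
    rw [hBsplit, Finset.sum_congr rfl hterm, htop, Finset.sum_sub_distrib]
    have hA' : (∑ j ∈ range n, (-1:PowerSeries ℤ)^(j+1) * X^((j+1)*N + tri (j+1)) * LL n (j+1))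
        = A - (-1)^0 * X^(0*N + tri 0) * LL n 0 := by
      rw [hA, hN, Finset.sum_range_succ']
      ring
    have hS' : (∑ j ∈ range n, (-1:PowerSeries ℤ)^(j+1) * X^((j+1)*n + tri (j+1)) * LL n (j+1))
        = SS n - (-1)^0 * X^(0*n + tri 0) * LL n 0 := by
      rw [SS, Finset.sum_range_succ']
      ring
    rw [hA', hS']
    show A - _ - (SS n - _) + _ = A - SS n - _
    ring_nf
  rw [keyB]
  have e4 : N*N + tri N = pent' N := by have := ptri N; unfold pent'; omega
  rw [e4]
  ring

noncomputable def TT (n : ℕ) : PowerSeries ℤ :=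
  1 + ∑ m ∈ range n, (-1)^(m+1) * (X^(pent (m+1)) + X^(pent' (m+1)))

lemma SS_eq_TT (n : ℕ) : SS n = TT n := by
  induction n with
  | zero =>
    rw [TT]
    show SS 0 = _
    rw [SS]
    simp [LL, tri]
  | succ k ih =>
    rw [SS_rec, ih, TT, TT, Finset.sum_range_succ]
    ring

/-- coefficients of SS n agree with those of (q)_n = LL n 0 up to degree n -/
lemma coeff_SS {m n : ℕ} (h : m ≤ n) : coeff m (SS n) = coeff m (LL n 0) := by
  rw [SS, Finset.sum_range_succ', map_add, map_sum]
  have h0 : ((-1:PowerSeries ℤ)^0 * X^(0*n + tri 0) * LL n 0) = LL n 0 := by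
    norm_num [tri]
  rw [h0]
  have hz : ∀ j ∈ range n, coeff m ((-1:PowerSeries ℤ)^(j+1) * X^((j+1)*n + tri (j+1)) * LL n (j+1)) = 0 := by
    intro j hj
    have hdvd : (X:PowerSeries ℤ)^((j+1)*n + tri (j+1)) ∣
        (-1:PowerSeries ℤ)^(j+1) * X^((j+1)*n + tri (j+1)) * LL n (j+1) :=
      ⟨(-1)^(j+1) * LL n (j+1), by ring⟩
    refine PowerSeries.X_pow_dvd_iff.mp hdvd m ?_
    have : n + 1 ≤ (j+1)*n + tri (j+1) := by
      have : tri (j+1) ≥ 1 := by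
        clear hj; induction j with
        | zero => simp [tri]
        | succ i ih => show 1 ≤ tri (i+1) + (i+2); omega
      nlinarith
    omega
  rw [Finset.sum_eq_zero hz, zero_add]

/-- generic stabilization: coefficient of degree m of ∏_{k<N}(1 + X^(k+1) u k) is
the same for all N > m -/
lemma coeff_prod_stab {R : Type*} [CommRing R] (u : ℕ → PowerSeries R) (m : ℕ) :
    ∀ {N M : ℕ}, m < N → m < M →
      coeff m (∏ k ∈ range N, (1 + X^(k+1) * u k)) =
      coeff m (∏ k ∈ range M, (1 + X^(k+1) * u k)) := by
  have key : ∀ N, m < N →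
      coeff m (∏ k ∈ range N, (1 + X^(k+1) * u k)) =
      coeff m (∏ k ∈ range (m+1), (1 + X^(k+1) * u k)) := by
    intro N
    induction N with
    | zero => omega
    | succ K ih =>
      intro hK
      rcases Nat.lt_or_ge m K with h | h
      · rw [Finset.prod_range_succ, mul_add, mul_one, map_add, ih h]
        have hd : (X:PowerSeries R)^(K+1) ∣ (∏ k ∈ range K, (1 + X^(k+1) * u k)) * (X^(K+1) * u K) :=
          ⟨(∏ k ∈ range K, (1 + X^(k+1) * u k)) * u K, by ring⟩
        have : coeff m ((∏ k ∈ range K, (1 + X^(k+1) * u k)) * (X^(K+1) * u K)) = 0 :=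
          PowerSeries.X_pow_dvd_iff.mp hd m (by omega)
        rw [this, add_zero]
      · have : K = m := by omega
        subst this; rfl
  intro N M hN hM
  rw [key N hN, key M hM]


lemma coeff_npow_mul (k n : ℕ) (f : PowerSeries ℤ) :
    coeff n ((-1)^k * f) = (-1)^k * coeff n f := by
  rcases Nat.even_or_odd k with h | h
  · rw [h.neg_one_pow, h.neg_one_pow, one_mul, one_mul]
  · rw [h.neg_one_pow, h.neg_one_pow, neg_one_mul, neg_one_mul, map_neg]

lemma coeff_F1 {m N : ℕ} (h : m < N) :
    coeff m (F 1) = coeff m (LL N 0) := by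
  rw [F, iProd, coeff_mk, LL, ← Finset.range_eq_Ico]
  have h2 : ∀ k, (1 - (X:PowerSeries ℤ)^(1*(k+1))) = 1 + X^(k+1) * (-1) := fun k => by
    rw [one_mul]; ring
  rw [Finset.prod_congr rfl fun k _ => h2 k,
    Finset.prod_congr rfl fun k (_ : k ∈ range N) => (by ring :
      (1 - (X:PowerSeries ℤ)^(k+1)) = 1 + X^(k+1) * (-1))]
  exact coeff_prod_stab (fun _ => (-1)) m (Nat.lt_succ_self m) h

lemma coeff_F1_TT (m : ℕ) : coeff m (F 1) = coeff m (TT (m+1)) := by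
  rw [coeff_F1 (Nat.lt_succ_self m), ← coeff_SS (Nat.le_succ m), SS_eq_TT]

lemma coeff_TT_zero (N : ℕ) : coeff 0 (TT N) = 1 := by
  rw [TT, map_add, map_sum, PowerSeries.coeff_zero_eq_constantCoeff, map_one]
  rw [Finset.sum_eq_zero, add_zero]
  intro b _
  rw [← PowerSeries.coeff_zero_eq_constantCoeff_apply, coeff_npow_mul, map_add,
    PowerSeries.coeff_X_pow, PowerSeries.coeff_X_pow, if_neg, if_neg, add_zero, mul_zero]
  · have h1 := pent_one_le (show 1 ≤ b+1 by omega)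
    have := pent_lt_pent' (show 1 ≤ b+1 by omega)
    omega
  · have := pent_one_le (show 1 ≤ b+1 by omega)
    omega

lemma coeff_TT_of_pent {M N : ℕ} (hM : 1 ≤ M) (hMN : M ≤ N) :
    coeff (pent M) (TT N) = (-1)^M := by
  rw [TT, map_add, map_sum]
  have h0 : coeff (pent M) (1 : PowerSeries ℤ) = 0 := by
    rw [PowerSeries.coeff_one, if_neg]
    have := pent_one_le hM; omega
  rw [h0, zero_add]
  rw [Finset.sum_eq_single (M-1)]
  · have hM1 : M - 1 + 1 = M := by omega
    rw [hM1, coeff_npow_mul, map_add, PowerSeries.coeff_X_pow, if_pos rfl,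
      PowerSeries.coeff_X_pow, if_neg (pent_ne_pent' hM hM)]
    ring
  · intro b hb hbne
    have hne : pent M ≠ pent (b+1) := fun hc => hbne (by
      have := pent_strictMono.injective hc; omega)
    rw [coeff_npow_mul, map_add, PowerSeries.coeff_X_pow, if_neg hne,
      PowerSeries.coeff_X_pow, if_neg (pent_ne_pent' hM (by omega)), add_zero, mul_zero]
  · intro hM2; exact absurd (Finset.mem_range.mpr (by omega)) hM2

lemma coeff_TT_of_pent' {M N : ℕ} (hM : 1 ≤ M) (hMN : M ≤ N) :
    coeff (pent' M) (TT N) = (-1)^M := by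
  rw [TT, map_add, map_sum]
  have h0 : coeff (pent' M) (1 : PowerSeries ℤ) = 0 := by
    rw [PowerSeries.coeff_one, if_neg]
    have h1 := pent_one_le hM
    have := pent_lt_pent' hM; omega
  rw [h0, zero_add]
  rw [Finset.sum_eq_single (M-1)]
  · have hM1 : M - 1 + 1 = M := by omega
    rw [hM1, coeff_npow_mul, map_add, PowerSeries.coeff_X_pow,
      if_neg (fun hc => pent_ne_pent' hM hM hc.symm), PowerSeries.coeff_X_pow, if_pos rfl]
    ring
  · intro b hb hbne
    have hne2 : pent' M ≠ pent' (b+1) := fun hc => hbne (by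
      have := pent'_strictMono.injective hc; omega)
    rw [coeff_npow_mul, map_add, PowerSeries.coeff_X_pow,
      if_neg (fun hc => pent_ne_pent' (show 1 ≤ b+1 by omega) hM hc.symm),
      PowerSeries.coeff_X_pow, if_neg hne2, add_zero, mul_zero]
  · intro hM2; exact absurd (Finset.mem_range.mpr (by omega)) hM2

lemma coeff_F1_gp (n : ℕ) : coeff (gp n) (F 1) = (-1)^((n+1)/2) := by
  rw [coeff_F1_TT]
  by_cases h : Even n
  · rcases Nat.eq_zero_or_pos ((n+1)/2) with h0 | h1
    · have hn : n = 0 := by have := Nat.even_iff.mp h; omega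
      subst hn
      have hgp : gp 0 = 0 := by rw [gp_even h]; rfl
      rw [hgp, h0, pow_zero, coeff_TT_zero]
    · rw [gp_even h]
      apply coeff_TT_of_pent' h1
      have h2 := le_pent ((n+1)/2)
      unfold pent'; omega
  · rw [gp_odd h]
    have h' : n % 2 = 1 := Nat.odd_iff.mp (Nat.not_even_iff_odd.mp h)
    have h1 : 1 ≤ (n+1)/2 := by omega
    apply coeff_TT_of_pent h1
    have h2 := le_pent ((n+1)/2)
    omega


noncomputable abbrev phi : PowerSeries ℤ →+* PowerSeries (ZMod 4) :=
  PowerSeries.map (Int.castRingHom (ZMod 4))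

lemma coeff_phi (k : ℕ) (f : PowerSeries ℤ) :
    coeff k (phi f) = ((coeff k f : ℤ) : ZMod 4) :=
  PowerSeries.coeff_map _ _ _

lemma constF1 : constantCoeff (F 1) = 1 := by
  rw [F, iProd, ← PowerSeries.coeff_zero_eq_constantCoeff_apply, coeff_mk]
  simp

lemma F1_mul_psInv : F 1 * psInv (F 1) = 1 := by
  apply PowerSeries.mul_invOfUnit
  rw [constF1]; rfl

/-- coefficients of `phi Fneg` agree with the finite product up to degree n -/
lemma coeff_phi_Fneg {j N : ℕ} (h : j < N) :
    coeff j (phi Fneg) =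
      coeff j (∏ k ∈ range N, (1 + X^(k+1) * 1)) := by
  rw [coeff_phi, Fneg, iProd, coeff_mk]
  have : ((coeff j (∏ k ∈ range (j+1), (1 + X^(k+1))) : ℤ) : ZMod 4)
      = coeff j (phi (∏ k ∈ range (j+1), (1 + X^(k+1)))) := (coeff_phi _ _).symm
  rw [this, map_prod]
  have h2 : ∀ k, phi (1 + X^(k+1)) = 1 + (X:PowerSeries (ZMod 4))^(k+1) * 1 := by
    intro k
    rw [map_add, map_one, map_pow, PowerSeries.map_X, mul_one]
  rw [Finset.prod_congr rfl fun k _ => h2 k]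
  exact coeff_prod_stab (fun _ => 1) j (Nat.lt_succ_self j) h

lemma coeff_phi_F1 {j N : ℕ} (h : j < N) :
    coeff j (phi (F 1)) =
      coeff j (∏ k ∈ range N, (1 + X^(k+1) * (-1))) := by
  rw [coeff_phi, F, iProd, coeff_mk]
  have : ((coeff j (∏ k ∈ range (j+1), (1 - X^(1*(k+1)))) : ℤ) : ZMod 4)
      = coeff j (phi (∏ k ∈ range (j+1), (1 - X^(1*(k+1))))) := (coeff_phi _ _).symm
  rw [this, map_prod]
  have h2 : ∀ k, phi (1 - X^(1*(k+1))) = 1 + (X:PowerSeries (ZMod 4))^(k+1) * (-1) := by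
    intro k
    rw [map_sub, map_one, map_pow, PowerSeries.map_X, one_mul]; ring
  rw [Finset.prod_congr rfl fun k _ => h2 k]
  exact coeff_prod_stab (fun _ => (-1)) j (Nat.lt_succ_self j) h

lemma four_eq_zero : (4 : PowerSeries (ZMod 4)) = 0 := by
  rw [← map_ofNat (PowerSeries.C : ZMod 4 →+* PowerSeries (ZMod 4)) 4, show (4 : ZMod 4) = 0 from rfl, map_zero]

lemma sq_factor (e : ℕ) :
    (1 + (X:PowerSeries (ZMod 4))^e * 1)^2 = (1 + X^e * (-1))^2 := by
  have h := four_eq_zero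
  linear_combination (X:PowerSeries (ZMod 4))^e * h

lemma phi_sq_eq : (phi Fneg)^2 = (phi (F 1))^2 := by
  ext n
  rw [pow_two, pow_two, PowerSeries.coeff_mul, PowerSeries.coeff_mul]
  set P := ∏ k ∈ range (n+1), (1 + (X:PowerSeries (ZMod 4))^(k+1) * 1) with hP
  set Q := ∏ k ∈ range (n+1), (1 + (X:PowerSeries (ZMod 4))^(k+1) * (-1)) with hQ
  have hPQ : P * P = Q * Q := by
    rw [← pow_two, ← pow_two, hP, hQ, ← Finset.prod_pow, ← Finset.prod_pow]
    exact Finset.prod_congr rfl fun k _ => sq_factor (k+1)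
  have h1 : ∀ p ∈ antidiagonal n,
      coeff p.1 (phi Fneg) * coeff p.2 (phi Fneg)
      = coeff p.1 P * coeff p.2 P := by
    intro p hp
    have := Finset.HasAntidiagonal.mem_antidiagonal.mp hp
    rw [coeff_phi_Fneg (show p.1 < n+1 by omega), coeff_phi_Fneg (show p.2 < n+1 by omega)]
  have h2 : ∀ p ∈ antidiagonal n,
      coeff p.1 (phi (F 1)) * coeff p.2 (phi (F 1))
      = coeff p.1 Q * coeff p.2 Q := by
    intro p hp
    have := Finset.HasAntidiagonal.mem_antidiagonal.mp hp
    rw [coeff_phi_F1 (show p.1 < n+1 by omega), coeff_phi_F1 (show p.2 < n+1 by omega)]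
  rw [Finset.sum_congr rfl h1, Finset.sum_congr rfl h2, ← PowerSeries.coeff_mul,
    ← PowerSeries.coeff_mul, hPQ]

lemma a_mod4 (k : ℕ) : ((a k : ℤ) : ZMod 4) = ((coeff k (F 1) : ℤ) : ZMod 4) := by
  have : ((a k : ℤ) : ZMod 4) = coeff k (phi (Fneg^2 * psInv (F 1))) := by
    rw [coeff_phi]; rfl
  rw [this, map_mul, map_pow, phi_sq_eq, pow_two, mul_assoc, ← map_mul,
    F1_mul_psInv, map_one, mul_one, coeff_phi]

end Aux

/-- `a(ω_n) ≡ 1 (mod 4)` iff `n ≡ 0, 3 (mod 4)`, and `a(ω_n) ≡ 3 (mod 4)`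
iff `n ≡ 1, 2 (mod 4)`. -/
theorem a_pentagonal_mod_four (n : ℕ) :
    ((n % 4 = 0 ∨ n % 4 = 3) → a (gp n) % 4 = 1) ∧
      ((n % 4 = 1 ∨ n % 4 = 2) → a (gp n) % 4 = 3) := by
  have h1 := a_mod4 (gp n)
  rw [coeff_F1_gp] at h1
  set M := (n+1)/2 with hM
  constructor
  · intro h
    have hMe : M % 2 = 0 := by omega
    rw [show ((-1:ℤ))^M = 1 from (Nat.even_iff.mpr hMe).neg_one_pow, Int.cast_one] at h1
    have h4 : (4:ℤ) ∣ (a (gp n) - 1) := by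
      have h5 := ZMod.intCast_zmod_eq_zero_iff_dvd (a (gp n) - 1) 4
      exact_mod_cast h5.mp (by push_cast; rw [h1]; ring)
    omega
  · intro h
    have hMo : M % 2 = 1 := by omega
    rw [show ((-1:ℤ))^M = -1 from (Nat.odd_iff.mpr hMo).neg_one_pow] at h1
    rw [show (((-1:ℤ):ZMod 4)) = -1 by push_cast; ring] at h1
    have h4 : (4:ℤ) ∣ (a (gp n) + 1) := by
      have h5 := ZMod.intCast_zmod_eq_zero_iff_dvd (a (gp n) + 1) 4
      exact_mod_cast h5.mp (by push_cast; rw [h1]; ring)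
    omega
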